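/- For every odd prime p, C(2p−1, p−1) ≡ 1 (mod p²). -/

import Mathlib

theorem wolstenholme_weak (p : ℕ) (hp : p.Prime) (hp2 : p ≠ 2) :
    (((2 * p - 1).choose (p - 1) : ℤ)) ≡ 1 [ZMOD (p : ℤ)^2] := by
  have hp1 : 1 < p := hp.one_lt
  -- 2 * C(2p-1, p-1) = C(2p, p)
  have key : 2 * ((2 * p - 1).choose (p - 1)) = (2 * p).choose p := by
    have h := Nat.add_one_mul_choose_eq (2 * p - 1) (p - 1)
    have h2p : 2 * p - 1 + 1 = 2 * p := by omega
    have hpp : p - 1 + 1 = p := by omega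
    rw [h2p, hpp] at h
    apply Nat.eq_of_mul_eq_mul_right (show 0 < p by omega)
    rw [← h]; ring
  -- Vandermonde
  have hv : (2 * p).choose p = ∑ k ∈ Finset.range (p + 1),
      p.choose k * p.choose (p - k) := by
    have h := Nat.add_choose_eq p p p
    rw [Finset.Nat.sum_antidiagonal_eq_sum_range_succ_mk] at h
    rw [two_mul]; exact h
  -- C(2p, p) ≡ 2 mod p²
  have modc : ((2 * p).choose p : ℤ) ≡ 2 [ZMOD (p : ℤ)^2] := by
    obtain ⟨q, rfl⟩ : ∃ q, p = q + 1 := ⟨p - 1, by omega⟩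
    rw [hv]
    push_cast
    rw [Finset.sum_range_succ, Finset.sum_range_succ']
    simp only [Nat.choose_zero_right, Nat.choose_self, Nat.sub_self, Nat.sub_zero,
      Nat.cast_one, one_mul, mul_one]
    have hdvd : ((q + 1 : ℕ) : ℤ)^2 ∣
        ∑ k ∈ Finset.range q, ((q + 1).choose (k + 1) : ℤ) * ((q + 1).choose (q + 1 - (k + 1)) : ℤ) := by
      apply Finset.dvd_sum
      intro k hk
      rw [Finset.mem_range] at hk
      have h1 : (q + 1 : ℕ) ∣ (q + 1).choose (k + 1) :=
        hp.dvd_choose_self (by omega) (by omega)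
      have h2 : (q + 1 : ℕ) ∣ (q + 1).choose (q + 1 - (k + 1)) :=
        hp.dvd_choose_self (by omega) (by omega)
      obtain ⟨a, ha⟩ := h1
      obtain ⟨b, hb⟩ := h2
      rw [ha, hb]
      push_cast
      ring_nf
      exact ⟨(a : ℤ) * b, by ring⟩
    symm
    rw [Int.modEq_iff_dvd]
    obtain ⟨c, hc⟩ := hdvd
    exact ⟨c, by push_cast at hc ⊢; linarith⟩
  -- combine
  have h2 : (2 : ℤ) * ((2 * p - 1).choose (p - 1) : ℤ) ≡ 2 * 1 [ZMOD (p : ℤ)^2] := by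
    have : ((2 * ((2 * p - 1).choose (p - 1)) : ℕ) : ℤ) = 2 * ((2 * p - 1).choose (p - 1) : ℤ) := by
      push_cast; ring
    rw [← this, key, mul_one]
    exact modc
  have hm : (0 : ℤ) < (p : ℤ)^2 := by positivity
  have hgcd : ((p : ℤ)^2).gcd 2 = 1 := by
    have hodd : Odd (p ^ 2) := (hp.odd_of_ne_two hp2).pow
    have hc : Nat.Coprime (p ^ 2) 2 := hodd.coprime_two_right
    simpa [Int.gcd, Int.natAbs_pow] using hc
  have := Int.ModEq.cancel_left_div_gcd hm h2
  rwa [hgcd, Nat.cast_one, Int.ediv_one] at this
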